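/- (Reflection of a spherical wavefront centred at the origin.) Let ξ₀, η₀ ∈ ℂ and r₀ ∈ ℝ, and let β₀ ∈ ℝ satisfy β₀² = 4η₀η̄₀ + (1 + ξ₀ξ̄₀)²r₀². Assume 2(η̄₀ − η₀ξ̄₀²) + 2ξ̄₀(1 + ξ₀ξ̄₀)r₀ ≠ 0 and define ξ₁ = (2(η₀ξ̄₀ + η̄₀ξ₀) − (1 − ξ₀²ξ̄₀²)r₀ + (1 + ξ₀ξ̄₀)β₀)/(2(η̄₀ − η₀ξ̄₀²) + 2ξ̄₀(1 + ξ₀ξ̄₀)r₀). Then: (a) (1 + ξ̄₀ξ₁)²η₀ − (ξ₀ − ξ₁)²η̄₀ + (ξ₀ − ξ₁)(1 + ξ̄₀ξ₁)(1 + ξ₀ξ̄₀)r₀ = 0, i.e. the incident line of direction ξ₁ through the surface point determined by (ξ₀,η₀,r₀) has twistor coordinate 0 and hence passes through the origin; and (b) provided the relevant denominators are nonzero, the reflected direction (2ξ₀ξ̄₁ + 1 − ξ₀ξ̄₀)/((1 − ξ₀ξ̄₀)ξ̄₁ − 2ξ̄₀) equals (2η₀ + 2η̄₀ξ₀² + 2ξ₀β₀)/(2(ξ₀η̄₀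 − ξ̄₀η₀) − (1 + ξ₀ξ̄₀)²r₀ + (1 − ξ₀ξ̄₀)β₀). -/

import Mathlib

open ComplexConjugate

set_option maxHeartbeats 2000000

/-- Reflection of a spherical wavefront centred at the origin: with
`β₀` a real square root of `4η₀η̄₀ + (1 + ξ₀ξ̄₀)²r₀²` and
`ξ₁ = (2(η₀ξ̄₀ + η̄₀ξ₀) − (1 − ξ₀²ξ̄₀²)r₀ + (1 + ξ₀ξ̄₀)β₀)/(2(η̄₀ − η₀ξ̄₀²) + 2ξ̄₀(1 + ξ₀ξ̄₀)r₀)`: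
(a) the incident line of direction `ξ₁` through the surface point determined by
`(ξ₀, η₀, r₀)` has twistor coordinate `0`, hence passes through the origin; and
(b) the reflected direction equals
`(2η₀ + 2η̄₀ξ₀² + 2ξ₀β₀)/(2(ξ₀η̄₀ − ξ̄₀η₀) − (1 + ξ₀ξ̄₀)²r₀ + (1 − ξ₀ξ̄₀)β₀)`. -/
theorem spherical_wave_reflection (ξ₀ η₀ : ℂ) (r₀ : ℝ) (β₀ : ℝ)
    (hβ : (β₀ : ℂ) ^ 2 = 4 * η₀ * conj η₀ + (1 + ξ₀ * conj ξ₀) ^ 2 * (r₀ : ℂ) ^ 2)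
    (hden : 2 * (conj η₀ - η₀ * (conj ξ₀) ^ 2) + 2 * conj ξ₀ * (1 + ξ₀ * conj ξ₀) * (r₀ : ℂ) ≠ 0)
    (ξ₁ : ℂ)
    (hξ₁ : ξ₁ = (2 * (η₀ * conj ξ₀ + conj η₀ * ξ₀) - (1 - ξ₀ ^ 2 * (conj ξ₀) ^ 2) * (r₀ : ℂ) +
        (1 + ξ₀ * conj ξ₀) * (β₀ : ℂ)) /
      (2 * (conj η₀ - η₀ * (conj ξ₀) ^ 2) + 2 * conj ξ₀ * (1 + ξ₀ * conj ξ₀) * (r₀ : ℂ))) :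
    ((1 + conj ξ₀ * ξ₁) ^ 2 * η₀ - (ξ₀ - ξ₁) ^ 2 * conj η₀ +
        (ξ₀ - ξ₁) * (1 + conj ξ₀ * ξ₁) * (1 + ξ₀ * conj ξ₀) * (r₀ : ℂ) = 0) ∧
    ((1 - ξ₀ * conj ξ₀) * conj ξ₁ - 2 * conj ξ₀ ≠ 0 →
      2 * (ξ₀ * conj η₀ - conj ξ₀ * η₀) - (1 + ξ₀ * conj ξ₀) ^ 2 * (r₀ : ℂ) +
        (1 - ξ₀ * conj ξ₀) * (β₀ : ℂ) ≠ 0 →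
      (2 * ξ₀ * conj ξ₁ + 1 - ξ₀ * conj ξ₀) /
          ((1 - ξ₀ * conj ξ₀) * conj ξ₁ - 2 * conj ξ₀) =
        (2 * η₀ + 2 * conj η₀ * ξ₀ ^ 2 + 2 * ξ₀ * (β₀ : ℂ)) /
          (2 * (ξ₀ * conj η₀ - conj ξ₀ * η₀) - (1 + ξ₀ * conj ξ₀) ^ 2 * (r₀ : ℂ) +
            (1 - ξ₀ * conj ξ₀) * (β₀ : ℂ))) := by
  have hdenc : 2 * (η₀ - conj η₀ * ξ₀ ^ 2) + 2 * ξ₀ * (1 + conj ξ₀ * ξ₀) * (r₀ : ℂ) ≠ 0 := by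
    intro h
    apply hden
    have := congrArg conj h
    simp only [map_add, map_sub, map_mul, map_pow, map_one, map_ofNat, Complex.conj_conj,
      Complex.conj_ofReal, map_zero] at this
    linear_combination this
  have hξ₁c : conj ξ₁ = (2 * (η₀ * conj ξ₀ + conj η₀ * ξ₀) - (1 - ξ₀ ^ 2 * (conj ξ₀) ^ 2) * (r₀ : ℂ) +
        (1 + ξ₀ * conj ξ₀) * (β₀ : ℂ)) /
      (2 * (η₀ - conj η₀ * ξ₀ ^ 2) + 2 * ξ₀ * (1 + conj ξ₀ * ξ₀) * (r₀ : ℂ)) := by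
    rw [hξ₁, map_div₀]
    simp only [map_add, map_sub, map_mul, map_pow, map_one, map_ofNat, Complex.conj_conj,
      Complex.conj_ofReal]
    ring
  constructor
  · set D : ℂ := 2 * (conj η₀ - η₀ * (conj ξ₀) ^ 2) + 2 * conj ξ₀ * (1 + ξ₀ * conj ξ₀) * (r₀ : ℂ)
      with hD
    set N : ℂ := 2 * (η₀ * conj ξ₀ + conj η₀ * ξ₀) - (1 - ξ₀ ^ 2 * (conj ξ₀) ^ 2) * (r₀ : ℂ) +
      (1 + ξ₀ * conj ξ₀) * (β₀ : ℂ) with hNdef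
    have hN : ξ₁ * D = N := by
      rw [hξ₁]; field_simp
    have key : D ^ 2 * ((1 + conj ξ₀ * ξ₁) ^ 2 * η₀ - (ξ₀ - ξ₁) ^ 2 * conj η₀ +
        (ξ₀ - ξ₁) * (1 + conj ξ₀ * ξ₁) * (1 + ξ₀ * conj ξ₀) * (r₀ : ℂ)) = 0 := by
      linear_combination (((-(conj η₀) - conj ξ₀ * (r₀:ℂ) + (conj ξ₀)^2 * η₀ - ξ₀ * (conj ξ₀)^2 * (r₀:ℂ)) *
            (D * ξ₁ + N) +
          (-(r₀:ℂ) + 2 * conj ξ₀ * η₀ + 2 * ξ₀ * conj η₀ + ξ₀^2 * (conj ξ₀)^2 * (r₀:ℂ)) * D) * hN +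
        (-(conj η₀) - conj ξ₀ * (r₀:ℂ) + (conj ξ₀)^2 * η₀
          - 2 * ξ₀ * conj ξ₀ * conj η₀ - 3 * ξ₀ * (conj ξ₀)^2 * (r₀:ℂ)
          + 2 * ξ₀ * (conj ξ₀)^3 * η₀ - ξ₀^2 * (conj ξ₀)^2 * conj η₀
          - 3 * ξ₀^2 * (conj ξ₀)^3 * (r₀:ℂ) + ξ₀^2 * (conj ξ₀)^4 * η₀
          - ξ₀^3 * (conj ξ₀)^4 * (r₀:ℂ)) * hβ)
    rcases mul_eq_zero.1 key with h | h
    · exact absurd (pow_eq_zero_iff two_ne_zero |>.1 h) hden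
    · exact h
  · intro h1 h2
    rw [div_eq_div_iff h1 h2]
    rw [hξ₁c]
    have hE : η₀ - ξ₀ ^ 2 * conj η₀ + ξ₀ * (r₀ : ℂ) * (1 + ξ₀ * conj ξ₀) ≠ 0 := by
      intro h; apply hdenc; linear_combination 2 * h
    field_simp
    ring
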